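/- Let $u=x_3-f(x_1,x_2)$ define an $x_3$-graph in the Heisenberg group, and suppose near a non-characteristic point $g$ there is a constant $a$ with $X_2u=a\,X_1u$ in a neighborhood of $g$. Then the sub-Riemannian Gaussian curvature satisfies $\mathcal{K}_0(g)=0$. -/

import Mathlib

/-- The left-invariant vector field `X₁ = ∂₁ - (x₂/2)∂₃` acting on a function. -/
noncomputable def Xone (f : ℝ × ℝ × ℝ → ℝ) (x : ℝ × ℝ × ℝ) : ℝ :=
  deriv (fun s => f (s, x.2.1, x.2.2)) x.1
    - x.2.1 / 2 * deriv (fun s => f (x.1, x.2.1, s)) x.2.2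

/-- The left-invariant vector field `X₂ = ∂₂ + (x₁/2)∂₃` acting on a function. -/
noncomputable def Xtwo (f : ℝ × ℝ × ℝ → ℝ) (x : ℝ × ℝ × ℝ) : ℝ :=
  deriv (fun s => f (x.1, s, x.2.2)) x.2.1
    + x.1 / 2 * deriv (fun s => f (x.1, x.2.1, s)) x.2.2

/-- The vertical vector field `X₃ = ∂₃` acting on a function. -/
noncomputable def Xthree (f : ℝ × ℝ × ℝ → ℝ) (x : ℝ × ℝ × ℝ) : ℝ :=
  deriv (fun s => f (x.1, x.2.1, s)) x.2.2

/-- Norm of the horizontal gradient `∇_H u = (X₁u, X₂u)`. -/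
noncomputable def normH (u : ℝ × ℝ × ℝ → ℝ) (x : ℝ × ℝ × ℝ) : ℝ :=
  Real.sqrt ((Xone u x) ^ 2 + (Xtwo u x) ^ 2)

/-- The sub-Riemannian Gaussian curvature of the surface `{u = 0}`:
`𝒦₀ = -(X₃u/‖∇_Hu‖)² - (X₂u/‖∇_Hu‖)X₁(X₃u/‖∇_Hu‖) + (X₁u/‖∇_Hu‖)X₂(X₃u/‖∇_Hu‖)`. -/
noncomputable def K0 (u : ℝ × ℝ × ℝ → ℝ) (x : ℝ × ℝ × ℝ) : ℝ :=
  -(Xthree u x / normH u x) ^ 2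
    - (Xtwo u x / normH u x) * Xone (fun y => Xthree u y / normH u y) x
    + (Xone u x / normH u x) * Xtwo (fun y => Xthree u y / normH u y) x

/-! ### Auxiliary definitions and lemmas -/

/-- `X₁u` for the graph `u = x₃ - f(x₁,x₂)`, as a function on the plane. -/
noncomputable def Pg (f : ℝ × ℝ → ℝ) (v : ℝ × ℝ) : ℝ :=
  -(fderiv ℝ f v (1, 0)) - v.2 / 2

/-- `X₂u` for the graph `u = x₃ - f(x₁,x₂)`, as a function on the plane. -/
noncomputable def Qg (f : ℝ × ℝ → ℝ) (v : ℝ × ℝ) : ℝ :=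
  -(fderiv ℝ f v (0, 1)) + v.1 / 2

lemma hline1 (b : ℝ) (t : ℝ) : HasDerivAt (fun s : ℝ => (s, b)) (((1:ℝ), (0:ℝ))) t :=
  (hasDerivAt_id t).prodMk (hasDerivAt_const t b)

lemma hline2 (b : ℝ) (t : ℝ) : HasDerivAt (fun s : ℝ => (b, s)) (((0:ℝ), (1:ℝ))) t :=
  (hasDerivAt_const t b).prodMk (hasDerivAt_id t)

lemma hderiv_f_dir (f : ℝ × ℝ → ℝ) (hf : ContDiff ℝ 2 f) {γ : ℝ → ℝ × ℝ} {d : ℝ × ℝ} {t : ℝ}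
    (hγ : HasDerivAt γ d t) :
    HasDerivAt (fun s => f (γ s)) (fderiv ℝ f (γ t) d) t :=
  (hf.differentiable (by norm_num) (γ t)).hasFDerivAt.comp_hasDerivAt t hγ

lemma hderiv_fderiv_dir (f : ℝ × ℝ → ℝ) (hf : ContDiff ℝ 2 f) (e : ℝ × ℝ)
    {γ : ℝ → ℝ × ℝ} {d : ℝ × ℝ} {t : ℝ} (hγ : HasDerivAt γ d t) :
    HasDerivAt (fun s => fderiv ℝ f (γ s) e) (fderiv ℝ (fderiv ℝ f) (γ t) d e) t := by
  have h1 : DifferentiableAt ℝ (fderiv ℝ f) (γ t) :=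
    ((hf.fderiv_right (m := 1) one_add_one_eq_two.le).differentiable one_ne_zero).differentiableAt
  have h2 : HasFDerivAt (fun w => fderiv ℝ f w e)
      ((ContinuousLinearMap.apply ℝ ℝ e).comp (fderiv ℝ (fderiv ℝ f) (γ t))) (γ t) :=
    (ContinuousLinearMap.apply ℝ ℝ e).hasFDerivAt.comp (γ t) h1.hasFDerivAt
  exact h2.comp_hasDerivAt t hγ

lemma hP1 (f : ℝ × ℝ → ℝ) (hf : ContDiff ℝ 2 f) (t b : ℝ) :
    HasDerivAt (fun s => Pg f (s, b)) (-(fderiv ℝ (fderiv ℝ f) (t, b) (1,0) (1,0))) t := by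
  exact (hderiv_fderiv_dir f hf (1,0) (hline1 b t)).neg.sub_const (b / 2)

lemma hP2 (f : ℝ × ℝ → ℝ) (hf : ContDiff ℝ 2 f) (t b : ℝ) :
    HasDerivAt (fun s => Pg f (t, s)) (-(fderiv ℝ (fderiv ℝ f) (t, b) (0,1) (1,0)) - 1/2) b := by
  have h := (hderiv_fderiv_dir f hf (1,0) (hline2 t b)).neg.sub
    ((hasDerivAt_id b).div_const 2)
  exact h.congr_deriv (by norm_num)

lemma hQ1 (f : ℝ × ℝ → ℝ) (hf : ContDiff ℝ 2 f) (t b : ℝ) :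
    HasDerivAt (fun s => Qg f (s, b)) (-(fderiv ℝ (fderiv ℝ f) (t, b) (1,0) (0,1)) + 1/2) t := by
  have h := (hderiv_fderiv_dir f hf (0,1) (hline1 b t)).neg.add
    ((hasDerivAt_id t).div_const 2)
  exact h.congr_deriv (by norm_num)

lemma hQ2 (f : ℝ × ℝ → ℝ) (hf : ContDiff ℝ 2 f) (t b : ℝ) :
    HasDerivAt (fun s => Qg f (t, s)) (-(fderiv ℝ (fderiv ℝ f) (t, b) (0,1) (0,1))) b := by
  exact (hderiv_fderiv_dir f hf (0,1) (hline2 t b)).neg.add_const (t / 2)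

lemma Xthree_graph (f : ℝ × ℝ → ℝ) (x : ℝ × ℝ × ℝ) :
    Xthree (fun y => y.2.2 - f (y.1, y.2.1)) x = 1 := by
  show deriv (fun s : ℝ => s - f (x.1, x.2.1)) x.2.2 = 1
  simpa using ((hasDerivAt_id x.2.2).sub_const (f (x.1, x.2.1))).deriv

lemma Xone_graph (f : ℝ × ℝ → ℝ) (hf : ContDiff ℝ 2 f) (x : ℝ × ℝ × ℝ) :
    Xone (fun y => y.2.2 - f (y.1, y.2.1)) x = Pg f (x.1, x.2.1) := by
  have h1 : deriv (fun s : ℝ => x.2.2 - f (s, x.2.1)) x.1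
      = -(fderiv ℝ f (x.1, x.2.1) (1, 0)) := by
    exact ((hasDerivAt_const x.1 x.2.2).sub (hderiv_f_dir f hf (hline1 x.2.1 x.1))).deriv.trans (zero_sub _)
  have h2 : deriv (fun s : ℝ => s - f (x.1, x.2.1)) x.2.2 = 1 := by
    simpa using ((hasDerivAt_id x.2.2).sub_const (f (x.1, x.2.1))).deriv
  show deriv (fun s : ℝ => x.2.2 - f (s, x.2.1)) x.1
      - x.2.1 / 2 * deriv (fun s : ℝ => s - f (x.1, x.2.1)) x.2.2 = Pg f (x.1, x.2.1)
  rw [h1, h2, Pg]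
  ring

lemma Xtwo_graph (f : ℝ × ℝ → ℝ) (hf : ContDiff ℝ 2 f) (x : ℝ × ℝ × ℝ) :
    Xtwo (fun y => y.2.2 - f (y.1, y.2.1)) x = Qg f (x.1, x.2.1) := by
  have h1 : deriv (fun s : ℝ => x.2.2 - f (x.1, s)) x.2.1
      = -(fderiv ℝ f (x.1, x.2.1) (0, 1)) := by
    exact ((hasDerivAt_const x.2.1 x.2.2).sub (hderiv_f_dir f hf (hline2 x.1 x.2.1))).deriv.trans (zero_sub _)
  have h2 : deriv (fun s : ℝ => s - f (x.1, x.2.1)) x.2.2 = 1 := by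
    simpa using ((hasDerivAt_id x.2.2).sub_const (f (x.1, x.2.1))).deriv
  show deriv (fun s : ℝ => x.2.2 - f (x.1, s)) x.2.1
      + x.1 / 2 * deriv (fun s : ℝ => s - f (x.1, x.2.1)) x.2.2 = Qg f (x.1, x.2.1)
  rw [h1, h2, Qg]
  ring

lemma keyalg (N0 P0 Q0 B11 B12 B21 B22 a c d : ℝ) (hN0 : N0 ≠ 0)
    (hNsq : N0 ^ 2 = P0 ^ 2 + Q0 ^ 2) (hQ0 : Q0 = a * P0)
    (h1 : -B12 + 1 / 2 = a * -B11) (h2 : -B22 = a * (-B21 - 1 / 2)) (hsym : B12 = B21) :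
    -(1 / N0) ^ 2
      - Q0 / N0 * (-((P0 * -B11 + Q0 * (-B12 + 1 / 2)) / N0) / N0 ^ 2 - c / 2 * 0)
      + P0 / N0 * (-((P0 * (-B21 - 1 / 2) + Q0 * -B22) / N0) / N0 ^ 2 + d / 2 * 0) = 0 := by
  subst hQ0 hsym
  have hB12 : B12 = a * B11 + 1 / 2 := by linarith
  have hB22 : B22 = a * (B12 + 1 / 2) := by linarith
  subst hB22 hB12
  field_simp
  linear_combination (-2) * hNsq

/-- For an `x₃`-graph `u = x₃ - f(x₁,x₂)`, if `X₂u = a·X₁u` in a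
neighborhood of a non-characteristic point `g`, then `𝒦₀(g) = 0`. -/
theorem stmt15 (f : ℝ × ℝ → ℝ) (hf : ContDiff ℝ 2 f) (g : ℝ × ℝ × ℝ)
    (hg : g.2.2 = f (g.1, g.2.1))
    (hnc : (Xone (fun y => y.2.2 - f (y.1, y.2.1)) g,
            Xtwo (fun y => y.2.2 - f (y.1, y.2.1)) g) ≠ (0, 0))
    (a : ℝ)
    (hdep : ∀ᶠ x in nhds g,
      Xtwo (fun y => y.2.2 - f (y.1, y.2.1)) x
        = a * Xone (fun y => y.2.2 - f (y.1, y.2.1)) x) :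
    K0 (fun y => y.2.2 - f (y.1, y.2.1)) g = 0 := by
  have hXone := Xone_graph f hf
  have hXtwo := Xtwo_graph f hf
  have hX3 := Xthree_graph f
  have hnormH : ∀ y : ℝ × ℝ × ℝ, normH (fun y => y.2.2 - f (y.1, y.2.1)) y
      = Real.sqrt (Pg f (y.1, y.2.1) ^ 2 + Qg f (y.1, y.2.1) ^ 2) := by
    intro y; rw [normH, hXone, hXtwo]
  have hinner : (fun y : ℝ × ℝ × ℝ => Xthree (fun y => y.2.2 - f (y.1, y.2.1)) y
      / normH (fun y => y.2.2 - f (y.1, y.2.1)) y)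
      = fun y : ℝ × ℝ × ℝ =>
        (Real.sqrt (Pg f (y.1, y.2.1) ^ 2 + Qg f (y.1, y.2.1) ^ 2))⁻¹ := by
    funext y; rw [hX3, hnormH, one_div]
  set P0 := Pg f (g.1, g.2.1) with hP0def
  set Q0 := Qg f (g.1, g.2.1) with hQ0def
  have hQ0 : Q0 = a * P0 := by
    have h := hdep.self_of_nhds
    rwa [hXone, hXtwo] at h
  have hP0 : P0 ≠ 0 := by
    intro h0
    apply hnc
    rw [hXone, hXtwo, ← hP0def, ← hQ0def, hQ0, h0]
    simp
  have hS : 0 < P0 ^ 2 + Q0 ^ 2 := by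
    have h1 : 0 < P0 ^ 2 := by positivity
    nlinarith [sq_nonneg Q0]
  set N0 := Real.sqrt (P0 ^ 2 + Q0 ^ 2) with hN0def
  have hN0 : 0 < N0 := Real.sqrt_pos.mpr hS
  have hNsq : N0 ^ 2 = P0 ^ 2 + Q0 ^ 2 := Real.sq_sqrt hS.le
  set B11 := fderiv ℝ (fderiv ℝ f) (g.1, g.2.1) (1,0) (1,0) with hB11def
  set B12 := fderiv ℝ (fderiv ℝ f) (g.1, g.2.1) (1,0) (0,1) with hB12def
  set B21 := fderiv ℝ (fderiv ℝ f) (g.1, g.2.1) (0,1) (1,0) with hB21def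
  set B22 := fderiv ℝ (fderiv ℝ f) (g.1, g.2.1) (0,1) (0,1) with hB22def
  have hsym : B12 = B21 := by
    have h2 : IsSymmSndFDerivAt ℝ f (g.1, g.2.1) :=
      (hf.contDiffAt).isSymmSndFDerivAt (by norm_num)
    exact h2 _ _
  -- the dependence relation transfers to the planar functions along both coordinate lines
  have hE1 : (fun s => Qg f (s, g.2.1)) =ᶠ[nhds g.1] fun s => a * Pg f (s, g.2.1) := by
    have hc : ContinuousAt (fun s : ℝ => ((s, g.2.1, g.2.2) : ℝ × ℝ × ℝ)) g.1 := by fun_prop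
    have h := hc.eventually (p := fun x => Xtwo (fun y => y.2.2 - f (y.1, y.2.1)) x
        = a * Xone (fun y => y.2.2 - f (y.1, y.2.1)) x) hdep
    filter_upwards [h] with s hs
    rwa [hXone, hXtwo] at hs
  have hE2 : (fun s => Qg f (g.1, s)) =ᶠ[nhds g.2.1] fun s => a * Pg f (g.1, s) := by
    have hc : ContinuousAt (fun s : ℝ => ((g.1, s, g.2.2) : ℝ × ℝ × ℝ)) g.2.1 := by fun_prop
    have h := hc.eventually (p := fun x => Xtwo (fun y => y.2.2 - f (y.1, y.2.1)) x
        = a * Xone (fun y => y.2.2 - f (y.1, y.2.1)) x) hdep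
    filter_upwards [h] with s hs
    rwa [hXone, hXtwo] at hs
  have hdq1 : -B12 + 1 / 2 = a * -B11 := by
    have h1 := (hQ1 f hf g.1 g.2.1).deriv
    have h2 := ((hP1 f hf g.1 g.2.1).const_mul a).deriv
    have h3 := hE1.deriv_eq
    rw [h1, h2] at h3
    exact h3
  have hdq2 : -B22 = a * (-B21 - 1 / 2) := by
    have h1 := (hQ2 f hf g.1 g.2.1).deriv
    have h2 := ((hP2 f hf g.1 g.2.1).const_mul a).deriv
    have h3 := hE2.deriv_eq
    rw [h1, h2] at h3
    exact h3
  -- derivatives of 1/‖∇_H u‖ along the two coordinate directions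
  have hD1 : HasDerivAt (fun s => (Real.sqrt (Pg f (s, g.2.1) ^ 2 + Qg f (s, g.2.1) ^ 2))⁻¹)
      (-((P0 * -B11 + Q0 * (-B12 + 1 / 2)) / N0) / N0 ^ 2) g.1 := by
    have hsum : HasDerivAt (fun s => Pg f (s, g.2.1) ^ 2 + Qg f (s, g.2.1) ^ 2)
        (2 * P0 * -B11 + 2 * Q0 * (-B12 + 1 / 2)) g.1 := by
      have h := ((hP1 f hf g.1 g.2.1).fun_pow 2).fun_add ((hQ1 f hf g.1 g.2.1).fun_pow 2)
      refine h.congr_deriv ?_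
      simp only [hP0def, hQ0def, hB11def, hB12def, Nat.cast_ofNat, pow_one]; ring
    have hsq : HasDerivAt (fun s => Real.sqrt (Pg f (s, g.2.1) ^ 2 + Qg f (s, g.2.1) ^ 2))
        ((P0 * -B11 + Q0 * (-B12 + 1 / 2)) / N0) g.1 := by
      have h := hsum.sqrt hS.ne'
      convert h using 1
      rw [← hN0def]
      field_simp
    exact hsq.inv hN0.ne'
  have hD2 : HasDerivAt (fun s => (Real.sqrt (Pg f (g.1, s) ^ 2 + Qg f (g.1, s) ^ 2))⁻¹)
      (-((P0 * (-B21 - 1 / 2) + Q0 * -B22) / N0) / N0 ^ 2) g.2.1 := by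
    have hsum : HasDerivAt (fun s => Pg f (g.1, s) ^ 2 + Qg f (g.1, s) ^ 2)
        (2 * P0 * (-B21 - 1 / 2) + 2 * Q0 * -B22) g.2.1 := by
      have h := ((hP2 f hf g.1 g.2.1).fun_pow 2).fun_add ((hQ2 f hf g.1 g.2.1).fun_pow 2)
      refine h.congr_deriv ?_
      simp only [hP0def, hQ0def, hB21def, hB22def, Nat.cast_ofNat, pow_one]; ring
    have hsq : HasDerivAt (fun s => Real.sqrt (Pg f (g.1, s) ^ 2 + Qg f (g.1, s) ^ 2))
        ((P0 * (-B21 - 1 / 2) + Q0 * -B22) / N0) g.2.1 := by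
      have h := hsum.sqrt hS.ne'
      convert h using 1
      rw [← hN0def]
      field_simp
    exact hsq.inv hN0.ne'
  -- compute K₀ at g
  simp only [K0]
  rw [hinner, hX3, hnormH, hXone, hXtwo]
  simp only [Xone, Xtwo]
  rw [hD1.deriv, hD2.deriv, deriv_const]
  exact keyalg N0 P0 Q0 B11 B12 B21 B22 a g.2.1 g.1 hN0.ne' hNsq hQ0 hdq1 hdq2 hsym
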